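/- arXiv:2103.13535 — 2 statements merged into one kernel-verified Lean document; each statement's English description precedes it below -/
import Mathlib

section
/- Let Q_k : 𝔻_ρ → ℂ be holomorphic and bounded by M on the polydisc 𝔻_ρ ⊂ ℂ^d, let v ∈ ℂ^d with |v| ≥ c > 0, and suppose Q_k vanishes on {⟨v,I⟩ = 0}. Define F_k(I) = Q_k(I)/(4πi⟨v,I⟩) off the hyperplane, extended holomorphically. Then for any 0 < δ < ρ, sup over 𝔻_{ρ−δ} of |F_k| is at most M/(δ·c). -/
/-- Let `Q` be holomorphic and bounded by `M` on the ball
`𝔻_ρ ⊂ ℂ^d`, let `v` with `|v| ≥ c > 0`, and suppose `Q` vanishes on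
`{⟨v,I⟩ = 0}`.  If `F` is the holomorphic extension of
`I ↦ Q(I)/(4πi⟨v,I⟩)`, then `sup_{𝔻_{ρ-δ}} |F| ≤ M/(δ·c)`. -/
theorem stmt_7 (d : ℕ) (ρ δ M c : ℝ) (hρ : 0 < ρ) (hδ : 0 < δ) (hδρ : δ < ρ)
    (hc : 0 < c)
    (v : EuclideanSpace ℂ (Fin d)) (hv : c ≤ ‖v‖)
    (Q F : EuclideanSpace ℂ (Fin d) → ℂ)
    (hQd : DifferentiableOn ℂ Q (Metric.ball 0 ρ))
    (hQM : ∀ I ∈ Metric.ball (0 : EuclideanSpace ℂ (Fin d)) ρ, ‖Q I‖ ≤ M)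
    (hQ0 : ∀ I ∈ Metric.ball (0 : EuclideanSpace ℂ (Fin d)) ρ,
      (∑ i, v i * I i) = 0 → Q I = 0)
    (hFd : DifferentiableOn ℂ F (Metric.ball 0 ρ))
    (hFQ : ∀ I ∈ Metric.ball (0 : EuclideanSpace ℂ (Fin d)) ρ,
      (∑ i, v i * I i) ≠ 0 →
      F I = Q I / (4 * (Real.pi : ℂ) * Complex.I * ∑ i, v i * I i)) :
    ∀ I : EuclideanSpace ℂ (Fin d), ‖I‖ ≤ ρ - δ → ‖F I‖ ≤ M / (δ * c) := by
  intro I hI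
  have hv0 : (0:ℝ) < ‖v‖ := lt_of_lt_of_le hc hv
  have hM0 : 0 ≤ M := le_trans (norm_nonneg _)
    (hQM 0 (by simpa using hρ))
  have hδc : 0 < δ * c := mul_pos hδ hc
  have hpi : (3:ℝ) < Real.pi := Real.pi_gt_three
  -- the direct bound away from the hyperplane
  have hbound : ∀ w : EuclideanSpace ℂ (Fin d), w ∈ Metric.ball (0:EuclideanSpace ℂ (Fin d)) ρ →
      δ * ‖v‖ / 2 ≤ ‖∑ i, v i * w i‖ → ‖F w‖ ≤ M / (δ * c) := by
    intro w hw hLw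
    have hLne : (∑ i, v i * w i) ≠ 0 := by
      intro h
      rw [h, norm_zero] at hLw
      nlinarith
    rw [hFQ w hw hLne, norm_div]
    have hden : ‖4 * (Real.pi:ℂ) * Complex.I * ∑ i, v i * w i‖
        = 4 * Real.pi * ‖∑ i, v i * w i‖ := by
      simp [norm_mul, Complex.norm_real, Real.norm_eq_abs,
        abs_of_pos Real.pi_pos]
    rw [hden]
    refine div_le_div₀ hM0 (hQM w hw) hδc ?_
    have h1 : δ * c ≤ δ * ‖v‖ := by nlinarith
    nlinarith [norm_nonneg (∑ i, v i * w i)]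
  by_cases hbig : δ * ‖v‖ / 2 ≤ ‖∑ i, v i * I i‖
  · exact hbound I (by rw [mem_ball_zero_iff]; linarith) hbig
  push_neg at hbig
  -- set up the complex line through I in the direction of the conjugate of v
  set u : EuclideanSpace ℂ (Fin d) := (WithLp.equiv 2 _).symm fun i => starRingEnd ℂ (v i) with hu
  have happ : ∀ i, u i = starRingEnd ℂ (v i) := fun i => rfl
  have hnu : ‖u‖ = ‖v‖ := by
    rw [EuclideanSpace.norm_eq, EuclideanSpace.norm_eq]; simp [happ]
  have hsum : (∑ i, v i * u i) = (‖v‖:ℂ)^2 := by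
    have h : (inner ℂ v v : ℂ) = (‖v‖:ℂ)^2 := inner_self_eq_norm_sq_to_K v
    rw [PiLp.inner_apply] at h
    simp only [RCLike.inner_apply, happ, mul_comm] at h ⊢
    exact h
  set L : ℂ := ∑ i, v i * I i with hLdef
  have hkey : ∀ z : ℂ, (∑ i, v i * (I + z • u) i) = L + z * (‖v‖:ℂ)^2 := by
    intro z
    have : ∀ i, (I + z • u) i = I i + z * u i := fun i => rfl
    calc (∑ i, v i * (I + z • u) i) = ∑ i, (v i * I i + z * (v i * u i)) := by
          simp only [this]; congr 1; ext i; ring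
      _ = L + z * ∑ i, v i * u i := by
          rw [Finset.sum_add_distrib, ← Finset.mul_sum, hLdef]
      _ = L + z * (‖v‖:ℂ)^2 := by rw [hsum]
  have hv2ne : ((‖v‖:ℂ))^2 ≠ 0 :=
    pow_ne_zero 2 (by exact_mod_cast hv0.ne')
  set z0 : ℂ := -L / (‖v‖:ℂ)^2 with hz0def
  set r : ℝ := δ / (2 * ‖v‖) with hrdef
  have hr : 0 < r := by positivity
  have hz0 : ‖z0‖ < r := by
    have : ‖z0‖ = ‖L‖ / ‖v‖^2 := by
      rw [hz0def, norm_div, norm_neg, norm_pow, Complex.norm_real, Real.norm_eq_abs,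
        abs_of_pos hv0]
    rw [this, hrdef, div_lt_div_iff₀ (by positivity) (by positivity)]
    nlinarith
  -- points on the line stay inside the ball of radius ρ
  have hmaps : ∀ z : ℂ, dist z z0 ≤ r →
      I + z • u ∈ Metric.ball (0:EuclideanSpace ℂ (Fin d)) ρ := by
    intro z hz
    rw [mem_ball_zero_iff]
    have hzn : ‖z‖ < 2 * r := by
      calc ‖z‖ = ‖(z - z0) + z0‖ := by ring_nf
        _ ≤ ‖z - z0‖ + ‖z0‖ := norm_add_le _ _
        _ < r + r := by
            rw [dist_eq_norm] at hz
            exact add_lt_add_of_le_of_lt hz hz0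
        _ = 2 * r := by ring
    have h2r : 2 * r * ‖v‖ = δ := by
      rw [hrdef]; field_simp
    calc ‖I + z • u‖ ≤ ‖I‖ + ‖z • u‖ := norm_add_le _ _
      _ = ‖I‖ + ‖z‖ * ‖v‖ := by rw [norm_smul, hnu]
      _ < (ρ - δ) + 2 * r * ‖v‖ := by
          have : ‖z‖ * ‖v‖ < 2 * r * ‖v‖ := by
            exact mul_lt_mul_of_pos_right hzn hv0
          linarith
      _ = ρ := by rw [h2r]; ring
  -- the restriction to the line
  set g : ℂ → ℂ := fun z => F (I + z • u) with hg
  have hgd : DiffContOnCl ℂ g (Metric.ball z0 r) := by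
    apply DifferentiableOn.diffContOnCl
    rw [closure_ball z0 hr.ne']
    apply DifferentiableOn.comp hFd
    · exact ((differentiable_id.smul_const u).const_add I).differentiableOn
    · intro z hz
      exact hmaps z (Metric.mem_closedBall.mp hz)
  have hfr : ∀ z ∈ frontier (Metric.ball z0 r), ‖g z‖ ≤ M / (δ * c) := by
    rw [frontier_ball z0 hr.ne']
    intro z hz
    have hzd : dist z z0 = r := Metric.mem_sphere.mp hz
    have hzmem := hmaps z (le_of_eq hzd)
    have hLz : (∑ i, v i * (I + z • u) i) = (z - z0) * (‖v‖:ℂ)^2 := by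
      rw [hkey, hz0def]
      rw [sub_mul, neg_div, neg_mul, sub_neg_eq_add, div_mul_cancel₀ _ hv2ne]
      ring
    apply hbound _ hzmem
    rw [hLz, norm_mul, norm_pow, Complex.norm_real, Real.norm_eq_abs, abs_of_pos hv0,
      ← dist_eq_norm, hzd, hrdef]
    rw [div_mul_eq_mul_div]
    apply le_of_eq
    field_simp
  have h0mem : (0:ℂ) ∈ closure (Metric.ball z0 r) := by
    apply subset_closure
    rw [Metric.mem_ball, dist_eq_norm, zero_sub, norm_neg]
    exact hz0
  have hfin := Complex.norm_le_of_forall_mem_frontier_norm_le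
    Metric.isBounded_ball hgd hfr h0mem
  have hg0 : g 0 = F I := by
    rw [hg]; simp
  rwa [hg0] at hfin
end

section
/- Let F be analytic on A_{r−δ, r−δ} with majorant norm |F|_{r−δ,r−δ} ≤ δ³ (for 0 < 3δ < r ≤ 1). Then the time-t Hamiltonian flow X_F^t of F, for 0 ≤ t ≤ 1, maps A_{r−3δ, r−3δ} into A_{r−2δ, r−2δ}, and |X_F^t(I,θ) − (I,θ)| ≤ δ² on A_{r−3δ,r−3δ}. -/
open Set Metric Topology Filter

/-- Let `F` be analytic on the complex annulus
`A_{r−δ,r−δ} = {(I,θ) : ‖I‖ < r−δ, ‖Im θ‖ < r−δ}` with `|F| ≤ δ³` there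
(`0 < 3δ < r ≤ 1`).  Then the time-`t` Hamiltonian flow `X_F^t` of `F`
(`İ = ∂_θF`, `θ̇ = −∂_I F`), for `0 ≤ t ≤ 1`, maps `A_{r−3δ,r−3δ}` into
`A_{r−2δ,r−2δ}` and moves points by at most `δ²`. -/
theorem stmt_15 (d : ℕ) (r δ : ℝ) (hδ : 0 < δ) (h3 : 3 * δ < r) (hr : r ≤ 1)
    (A : ℝ → Set ((Fin d → ℂ) × (Fin d → ℂ)))
    (hA : ∀ s, A s = {p | ‖p.1‖ < s ∧ ‖(fun i => (p.2 i).im : Fin d → ℝ)‖ < s})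
    (F : ((Fin d → ℂ) × (Fin d → ℂ)) → ℂ)
    (hFd : DifferentiableOn ℂ F (A (r - δ)))
    (hFb : ∀ p ∈ A (r - δ), ‖F p‖ ≤ δ ^ 3)
    (X : ℝ → ((Fin d → ℂ) × (Fin d → ℂ)) → ((Fin d → ℂ) × (Fin d → ℂ)))
    (hX0 : ∀ p, X 0 p = p)
    (hflow : ∀ t ∈ Set.Icc (0 : ℝ) 1, ∀ p ∈ A (r - 3 * δ),
      HasDerivAt (fun s => X s p)
        (fun i => fderiv ℂ F (X t p) (0, Pi.single i 1),
         fun i => -fderiv ℂ F (X t p) (Pi.single i 1, 0)) t) :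
    ∀ t ∈ Set.Icc (0 : ℝ) 1, ∀ p ∈ A (r - 3 * δ),
      X t p ∈ A (r - 2 * δ) ∧ ‖X t p - p‖ ≤ δ ^ 2 := by
  have hδ1 : δ < 1 / 3 := by linarith
  have hδδ : δ ^ 2 ≤ δ := by nlinarith
  -- the sets A s are open
  have hAopen : ∀ s, IsOpen (A s) := by
    intro s
    rw [hA s]
    have h1 : Continuous fun p : (Fin d → ℂ) × (Fin d → ℂ) => ‖p.1‖ :=
      continuous_fst.norm
    have h2 : Continuous fun p : (Fin d → ℂ) × (Fin d → ℂ) =>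
        ‖(fun i => (p.2 i).im : Fin d → ℝ)‖ := by
      refine Continuous.norm ?_
      exact continuous_pi fun i => Complex.continuous_im.comp ((continuous_apply i).comp continuous_snd)
    exact (isOpen_lt h1 continuous_const).inter (isOpen_lt h2 continuous_const)
  -- norm of imaginary part vector bounded by norm
  have hIm : ∀ v : Fin d → ℂ, ‖(fun i => (v i).im : Fin d → ℝ)‖ ≤ ‖v‖ := by
    intro v
    refine (pi_norm_le_iff_of_nonneg (norm_nonneg v)).2 fun i => ?_
    calc ‖(v i).im‖ ≤ ‖v i‖ := by
          simpa using Complex.abs_im_le_norm (v i)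
      _ ≤ ‖v‖ := norm_le_pi_norm v i
  -- points within δ of A (r - 3δ) lie in A (r - 2δ)
  have hmem : ∀ p ∈ A (r - 3 * δ), ∀ q, ‖q - p‖ ≤ δ → q ∈ A (r - 2 * δ) := by
    intro p hp q hq
    rw [hA] at hp ⊢
    obtain ⟨hp1, hp2⟩ := hp
    constructor
    · have : ‖q.1 - p.1‖ ≤ δ := le_trans (norm_fst_le (q - p)) hq
      calc ‖q.1‖ ≤ ‖p.1‖ + ‖q.1 - p.1‖ := norm_le_insert' q.1 p.1
        _ < r - 2 * δ := by linarith
    · have h2 : ‖q.2 - p.2‖ ≤ δ := le_trans (norm_snd_le (q - p)) hq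
      have him : ‖(fun i => ((q.2 - p.2) i).im : Fin d → ℝ)‖ ≤ δ :=
        le_trans (hIm _) h2
      have hdec : (fun i => ((q.2) i).im : Fin d → ℝ)
          = (fun i => ((p.2) i).im) + fun i => ((q.2 - p.2) i).im := by
        funext i; simp [Complex.sub_im]
      calc ‖(fun i => ((q.2) i).im : Fin d → ℝ)‖
          ≤ ‖(fun i => ((p.2) i).im : Fin d → ℝ)‖
            + ‖(fun i => ((q.2 - p.2) i).im : Fin d → ℝ)‖ := by
            rw [hdec]; exact norm_add_le _ _
        _ < r - 2 * δ := by linarith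
  -- Cauchy estimate: directional derivatives of F on A (r - 2δ) are ≤ δ²
  have hCauchy : ∀ q ∈ A (r - 2 * δ), ∀ u : (Fin d → ℂ) × (Fin d → ℂ), ‖u‖ ≤ 1 →
      ‖fderiv ℂ F q u‖ ≤ δ ^ 2 := by
    intro q hq u hu
    -- the affine map
    set L : ℂ → (Fin d → ℂ) × (Fin d → ℂ) := fun z => q + z • u with hL
    have hmaps : ∀ z : ℂ, ‖z‖ ≤ δ → L z ∈ A (r - δ) := by
      intro z hz
      rw [hA] at hq ⊢
      obtain ⟨hq1, hq2⟩ := hq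
      constructor
      · calc ‖q.1 + z • u.1‖ ≤ ‖q.1‖ + ‖z • u.1‖ := norm_add_le _ _
          _ ≤ ‖q.1‖ + ‖z‖ * ‖u.1‖ := by rw [norm_smul]
          _ ≤ ‖q.1‖ + δ * 1 := by
              have h1 : ‖u.1‖ ≤ 1 := le_trans (norm_fst_le u) hu
              have := norm_nonneg z
              nlinarith
          _ < r - δ := by linarith
      · have hdec : (fun i => (((L z).2) i).im : Fin d → ℝ)
            = (fun i => ((q.2) i).im) + fun i => ((z • u.2) i).im := by
          funext i; simp [hL, Complex.add_im]
        have h2 : ‖(fun i => ((z • u.2) i).im : Fin d → ℝ)‖ ≤ δ := by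
          refine le_trans (hIm _) ?_
          calc ‖z • u.2‖ = ‖z‖ * ‖u.2‖ := norm_smul _ _
            _ ≤ δ * 1 := by
                have h1 : ‖u.2‖ ≤ 1 := le_trans (norm_snd_le u) hu
                have := norm_nonneg z
                nlinarith
            _ = δ := mul_one δ
        calc ‖(fun i => (((L z).2) i).im : Fin d → ℝ)‖
            ≤ ‖(fun i => ((q.2) i).im : Fin d → ℝ)‖
              + ‖(fun i => ((z • u.2) i).im : Fin d → ℝ)‖ := by
              rw [hdec]; exact norm_add_le _ _
          _ < r - δ := by linarith
    have hLdiff : ∀ z : ℂ, HasDerivAt L u z := by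
      intro z
      simpa [hL] using ((hasDerivAt_id z).smul_const u).const_add q
    have hqA : q ∈ A (r - δ) := by
      have := hmaps 0 (by simp [hδ.le])
      simpa [hL] using this
    have hg : DifferentiableOn ℂ (F ∘ L) (closedBall (0 : ℂ) δ) := by
      refine DifferentiableOn.comp hFd ?_ ?_
      · exact fun z _ => (hLdiff z).differentiableAt.differentiableWithinAt
      · intro z hz
        exact hmaps z (by simpa using mem_closedBall_zero_iff.1 hz)
    have hgd : DiffContOnCl ℂ (F ∘ L) (ball (0 : ℂ) δ) := by
      refine DifferentiableOn.diffContOnCl ?_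
      rwa [closure_ball (0 : ℂ) hδ.ne']
    have hsphere : ∀ z ∈ sphere (0 : ℂ) δ, ‖(F ∘ L) z‖ ≤ δ ^ 3 := by
      intro z hz
      refine hFb _ (hmaps z ?_)
      rw [mem_sphere_zero_iff_norm] at hz
      exact hz.le
    have hbound := Complex.norm_deriv_le_of_forall_mem_sphere_norm_le hδ hgd hsphere
    have hderiv : HasDerivAt (F ∘ L) (fderiv ℂ F q u) 0 := by
      have hFq : DifferentiableAt ℂ F q :=
        hFd.differentiableAt ((hAopen _).mem_nhds hqA)
      have hL0 : L 0 = q := by simp [hL]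
      have hfd : HasFDerivAt F (fderiv ℂ F q) (L 0) := by
        rw [hL0]; exact hFq.hasFDerivAt
      exact hfd.comp_hasDerivAt 0 (hLdiff 0)
    rw [hderiv.deriv] at hbound
    calc ‖fderiv ℂ F q u‖ ≤ δ ^ 3 / δ := hbound
      _ = δ ^ 2 := by field_simp
  -- velocity bound
  have hvel : ∀ q ∈ A (r - 2 * δ),
      ‖((fun i => fderiv ℂ F q (0, Pi.single i 1),
         fun i => -fderiv ℂ F q (Pi.single i 1, 0)) :
         (Fin d → ℂ) × (Fin d → ℂ))‖ ≤ δ ^ 2 := by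
    intro q hq
    have hδ2 : (0:ℝ) ≤ δ ^ 2 := sq_nonneg δ
    have hsingle : ∀ i : Fin d, ‖(Pi.single i 1 : Fin d → ℂ)‖ ≤ 1 := by
      intro i
      refine (pi_norm_le_iff_of_nonneg zero_le_one).2 fun j => ?_
      rcases eq_or_ne j i with h | h
      · subst h; simp
      · simp [Pi.single_eq_of_ne h]
    rw [Prod.norm_def]
    refine max_le ?_ ?_
    · refine (pi_norm_le_iff_of_nonneg hδ2).2 fun i => ?_
      refine hCauchy q hq _ ?_
      rw [Prod.norm_def]
      simpa using hsingle i
    · refine (pi_norm_le_iff_of_nonneg hδ2).2 fun i => ?_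
      rw [norm_neg]
      refine hCauchy q hq _ ?_
      rw [Prod.norm_def]
      simpa using hsingle i
  -- main bootstrap
  intro t ht p hp
  set φ : ℝ → (Fin d → ℂ) × (Fin d → ℂ) := fun s => X s p with hφ
  have hφ0 : φ 0 = p := hX0 p
  have hcont : ∀ s ∈ Icc (0:ℝ) 1, ContinuousAt φ s := fun s hs =>
    (hflow s hs p hp).continuousAt
  set S : Set ℝ := {t | t ∈ Icc (0:ℝ) 1 ∧ ∀ s ∈ Icc 0 t, ‖φ s - p‖ ≤ δ ^ 2 * s}
    with hS
  have hS0 : (0:ℝ) ∈ S := by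
    refine ⟨⟨le_refl 0, zero_le_one⟩, fun s hs => ?_⟩
    have : s = 0 := le_antisymm hs.2 hs.1
    subst this
    simp [hφ0]
  have hSbdd : BddAbove S := ⟨1, fun x hx => hx.1.2⟩
  have hSne : S.Nonempty := ⟨0, hS0⟩
  set τ := sSup S with hτ
  have hτ0 : 0 ≤ τ := le_csSup hSbdd hS0
  have hτ1 : τ ≤ 1 := csSup_le hSne fun x hx => hx.1.2
  -- bound strictly below τ
  have hlt : ∀ s, 0 ≤ s → s < τ → ‖φ s - p‖ ≤ δ ^ 2 * s := by
    intro s hs0 hsτ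
    obtain ⟨x, hxS, hsx⟩ := exists_lt_of_lt_csSup hSne hsτ
    exact hxS.2 s ⟨hs0, hsx.le⟩
  -- τ ∈ S
  have hτS : τ ∈ S := by
    refine ⟨⟨hτ0, hτ1⟩, fun s hs => ?_⟩
    rcases lt_or_eq_of_le hs.2 with h | h
    · exact hlt s hs.1 h
    · rcases eq_or_lt_of_le hs.1 with h0 | h0
      · rw [← h0]; simp [hφ0]
      · -- limit from the left
        have hne : (𝓝[Ico (0:ℝ) s] s).NeBot := by
          rw [← mem_closure_iff_nhdsWithin_neBot, closure_Ico h0.ne]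
          exact ⟨h0.le, le_refl s⟩
        have hc : ContinuousWithinAt (fun x => ‖φ x - p‖) (Ico (0:ℝ) s) s :=
          (((hcont s ⟨h0.le, le_trans hs.2 hτ1⟩).sub continuousAt_const).norm).continuousWithinAt
        have hc2 : ContinuousWithinAt (fun x => δ ^ 2 * x) (Ico (0:ℝ) s) s :=
          (continuous_const.mul continuous_id).continuousWithinAt
        refine le_of_tendsto_of_tendsto hc hc2 ?_
        filter_upwards [self_mem_nhdsWithin] with x hx
        exact hlt x hx.1 (lt_of_lt_of_le hx.2 (le_of_eq h))
  -- every s ≤ τ stays in A (r - 2δ)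
  have hstay : ∀ s ∈ Icc (0:ℝ) τ, φ s ∈ A (r - 2 * δ) := by
    intro s hs
    have hb := hτS.2 s hs
    refine hmem p hp (φ s) ?_
    calc ‖φ s - p‖ ≤ δ ^ 2 * s := hb
      _ ≤ δ ^ 2 * 1 := by
          have := sq_nonneg δ
          nlinarith [hs.2, hτ1]
      _ ≤ δ := by rw [mul_one]; exact hδδ
  -- extension: show t ≤ τ
  have hmain : t ≤ τ := by
    by_contra hc
    push_neg at hc
    have hτlt1 : τ < 1 := lt_of_lt_of_le hc ht.2
    -- continuity at τ gives a neighborhood where φ ∈ A (r - 2δ)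
    have hφτ : φ τ ∈ A (r - 2 * δ) := hstay τ ⟨hτ0, le_refl τ⟩
    have hnhds : ∀ᶠ x in 𝓝 τ, φ x ∈ A (r - 2 * δ) :=
      (hcont τ ⟨hτ0, hτ1⟩).eventually_mem ((hAopen _).mem_nhds hφτ)
    obtain ⟨ε, hε, hball⟩ := Metric.eventually_nhds_iff.1 hnhds
    set t' := min 1 (τ + ε / 2) with ht'
    have hτt' : τ < t' := lt_min hτlt1 (by linarith)
    have ht'1 : t' ≤ 1 := min_le_left _ _
    have hin : ∀ s ∈ Icc (0:ℝ) t', φ s ∈ A (r - 2 * δ) := by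
      intro s hs
      rcases le_or_gt s τ with h | h
      · exact hstay s ⟨hs.1, h⟩
      · refine hball ?_
        have : s ≤ τ + ε / 2 := le_trans hs.2 (min_le_right _ _)
        rw [Real.dist_eq, abs_lt]
        constructor <;> linarith
    -- mean value inequality on [0, t']
    have hmv : ∀ s ∈ Icc (0:ℝ) t', ‖φ s - φ 0‖ ≤ δ ^ 2 * (s - 0) := by
      refine norm_image_sub_le_of_norm_deriv_le_segment'
        (f' := fun s => (fun i => fderiv ℂ F (φ s) (0, Pi.single i 1),
          fun i => -fderiv ℂ F (φ s) (Pi.single i 1, 0))) ?_ ?_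
      · intro x hx
        exact (hflow x ⟨hx.1, le_trans hx.2 ht'1⟩ p hp).hasDerivWithinAt
      · intro x hx
        exact hvel (φ x) (hin x ⟨hx.1, hx.2.le⟩)
    have ht'S : t' ∈ S := by
      refine ⟨⟨le_trans hτ0 hτt'.le, ht'1⟩, fun s hs => ?_⟩
      have := hmv s hs
      rwa [hφ0, sub_zero] at this
    exact absurd (le_csSup hSbdd ht'S) (not_le.2 hτt')
  -- conclude
  have hb : ‖φ t - p‖ ≤ δ ^ 2 * t := hτS.2 t ⟨ht.1, hmain⟩
  have hb2 : ‖X t p - p‖ ≤ δ ^ 2 := by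
    calc ‖X t p - p‖ = ‖φ t - p‖ := rfl
      _ ≤ δ ^ 2 * t := hb
      _ ≤ δ ^ 2 * 1 := by nlinarith [sq_nonneg δ, ht.2]
      _ = δ ^ 2 := mul_one _
  exact ⟨hmem p hp (X t p) (le_trans hb2 hδδ), hb2⟩
end
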